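/- arXiv:2004.00028 — 2 statements merged into one kernel-verified Lean document; each statement's English description precedes it below -/
import Mathlib

section
/- Let μ be a translation-invariant probability measure on A^{ℤ^d} that is locally mixing with rate function ρ. For any integers n ≥ m ≥ 1 and any finite S ⊆ ℤ^d ∖ Λ_n, set ε = sqrt(ρ(n−m) + |Λ_n ∖ Λ_m|/|Λ_n|). Then the set G ⊆ A^S of feasible configurations ξ with d̄(μ|^ξ_{Λ_n}, μ|_{Λ_n}) ≤ ε satisfies μ(G) ≥ 1 − ε. Consequently, every translation-invariant locally mixing measure on A^{ℤ^d} is Følner independent. -/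
open MeasureTheory ProbabilityTheory Filter
open scoped Classical ProbabilityTheory

/-- The lattice `ℤ^d`. -/
abbrev Vd (d : ℕ) := Fin d → ℤ

/-- The box `Λ_n = [-n,n]^d ∩ ℤ^d`, as a finite set. -/
noncomputable def BoxFd (d n : ℕ) : Finset (Vd d) := Fintype.piFinset fun _ => Finset.Icc (-(n : ℤ)) (n : ℤ)

/-- Translation action of `ℤ^d` on configurations. -/
def shiftD {d : ℕ} {A : Type*} (u : Vd d) (x : Vd d → A) : Vd d → A := fun v => x (v + u)

/-- The cylinder event fixing the restriction to `S` to agree with `f`. -/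
def cylS {d : ℕ} {A : Type*} (S : Finset (Vd d)) (f : Vd d → A) : Set (Vd d → A) :=
  {g | ∀ v ∈ S, g v = f v}

/-- A rate function: decreasing, nonnegative, tending to `0`. -/
def RateFunD (ρ : ℕ → ℝ) : Prop :=
  Antitone ρ ∧ (∀ k, 0 ≤ ρ k) ∧ Tendsto ρ atTop (nhds 0)

/-- A probability measure `μ` on `A^{ℤ^d}` is locally mixing with rate `ρ`. -/
def LocallyMixingOne {d : ℕ} {A : Type*} [MeasurableSpace A]
    (μ : Measure (Vd d → A)) (ρ : ℕ → ℝ) : Prop :=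
  ∀ n : ℕ, 1 ≤ n →
    ∃ π : Measure ((Vd d → A) × (Vd d → A)),
      π.fst = μ ∧ π.snd = μ ∧
      IndepFun (fun x (v : ↥((↑(BoxFd d n) : Set (Vd d))ᶜ)) => x.1 ↑v) Prod.snd π ∧
      ∀ k ≤ n, ∀ v ∈ BoxFd d k, π {x | x.1 v ≠ x.2 v} ≤ ENNReal.ofReal (ρ (n - k))

/-- The `d̄`-distance, over the window `W`, between (the marginals on `W` of) two measures:
the infimum over couplings of the average probability of disagreement at a vertex of `W`. -/
noncomputable def dbar {d : ℕ} {A : Type*} [MeasurableSpace A] (W : Finset (Vd d))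
    (ν lam : Measure (Vd d → A)) : ℝ :=
  sInf {r | ∃ π : Measure ((Vd d → A) × (Vd d → A)),
    π.fst = ν ∧ π.snd = lam ∧
    r = (W.card : ℝ)⁻¹ * ∑ v ∈ W, (π {x | x.1 v ≠ x.2 v}).toReal}

/-- Følner independence of a measure on `A^{ℤ^d}`. -/
def FolnerIndep {d : ℕ} {A : Type*} [MeasurableSpace A] (μ : Measure (Vd d → A)) : Prop :=
  ∀ ε : ℝ, 0 < ε → ∃ N : ℕ, ∀ n ≥ N, ∀ S : Finset (Vd d), (∀ v ∈ S, v ∉ BoxFd d n) →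
    μ {f | μ (cylS S f) ≠ 0 ∧ dbar (BoxFd d n) (μ[|cylS S f]) μ < ε} ≥
      ENNReal.ofReal (1 - ε)

open scoped ENNReal
set_option linter.unusedSectionVars false
set_option linter.unusedVariables false
set_option maxHeartbeats 1000000

section Atoms
variable {A : Type*} [Fintype A] [MeasurableSpace A]

/-- The measurable atom of a point in a finite measurable space. -/
def atomOf (a : A) : Set A := ⋂₀ {B | MeasurableSet B ∧ a ∈ B}

lemma mem_atomOf_self (a : A) : a ∈ atomOf a := fun _B hB => hB.2

lemma atomOf_subset {a : A} {B : Set A} (hB : MeasurableSet B) (ha : a ∈ B) :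
    atomOf a ⊆ B := Set.sInter_subset_of_mem ⟨hB, ha⟩

lemma measurableSet_atomOf (a : A) : MeasurableSet (atomOf a) := by
  have : Countable {B : Set A | MeasurableSet B ∧ a ∈ B} := Set.to_countable _
  exact MeasurableSet.sInter (Set.to_countable _) (fun B hB => hB.1)

lemma mem_of_mem_atomOf {a b : A} {B : Set A} (hb : b ∈ atomOf a) (hB : MeasurableSet B)
    (hbB : b ∈ B) : a ∈ B := by
  by_contra h
  exact (hb Bᶜ ⟨hB.compl, h⟩) hbB

lemma atomOf_eq_of_mem {a b : A} (hb : b ∈ atomOf a) : atomOf b = atomOf a := by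
  apply Set.Subset.antisymm
  · intro c hc B hB
    exact hc B ⟨hB.1, atomOf_subset hB.1 hB.2 hb⟩
  · intro c hc B hB
    exact hc B ⟨hB.1, mem_of_mem_atomOf hb hB.1 hB.2⟩

lemma mem_atomOf_symm {a b : A} (hb : b ∈ atomOf a) : a ∈ atomOf b := by
  rw [atomOf_eq_of_mem hb]; exact mem_atomOf_self a

/-- Measurable sets in a product space are invariant under coordinatewise atom-equivalence. -/
lemma measurableSet_atom_invariant {ι : Type*} {U : Set (ι → A)} (hU : MeasurableSet U)
    {g g' : ι → A} (hgg : ∀ v, g' v ∈ atomOf (g v)) (hg : g ∈ U) : g' ∈ U := by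
  let m' : MeasurableSpace (ι → A) :=
    { MeasurableSet' := fun U =>
        ∀ f f' : ι → A, (∀ v, f' v ∈ atomOf (f v)) → (f ∈ U ↔ f' ∈ U)
      measurableSet_empty := by intro f f' _; simp
      measurableSet_compl := by
        intro s hs f f' h
        simp only [Set.mem_compl_iff]
        exact not_congr (hs f f' h)
      measurableSet_iUnion := by
        intro s hs f f' h
        simp only [Set.mem_iUnion]
        exact exists_congr fun i => hs i f f' h }
  have hle : (MeasurableSpace.pi : MeasurableSpace (ι → A)) ≤ m' := by
    refine iSup_le fun v => ?_
    intro s hs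
    obtain ⟨B, hB, rfl⟩ := hs
    intro f f' h
    simp only [Set.mem_preimage]
    constructor
    · intro hf; exact atomOf_subset hB hf (h v)
    · intro hf'; exact atomOf_subset hB hf' (mem_atomOf_symm (h v))
  exact (hle U hU g g' hgg).mp hg
end Atoms


section Chat
variable {d : ℕ} {A : Type*} [Fintype A] [MeasurableSpace A]

/-- The measurable hull of a cylinder: coordinates in `S` lie in the atoms of `f`. -/
def ChatS (S : Finset (Vd d)) (f : Vd d → A) : Set (Vd d → A) :=
  {g | ∀ v ∈ S, g v ∈ atomOf (f v)}

lemma cylS_subset_ChatS (S : Finset (Vd d)) (f : Vd d → A) : cylS S f ⊆ ChatS S f := by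
  intro g hg v hv
  rw [hg v hv]
  exact mem_atomOf_self _

lemma measurableSet_ChatS (S : Finset (Vd d)) (f : Vd d → A) : MeasurableSet (ChatS S f) := by
  have : ChatS S f = ⋂ v ∈ S, (fun g : Vd d → A => g v) ⁻¹' atomOf (f v) := by
    ext g; simp [ChatS]
  rw [this]
  exact MeasurableSet.biInter S.countable_toSet
    (fun v _ => measurable_pi_apply v (measurableSet_atomOf (f v)))

lemma ChatS_subset {S : Finset (Vd d)} {f : Vd d → A} {U : Set (Vd d → A)}
    (hU : MeasurableSet U) (h : cylS S f ⊆ U) : ChatS S f ⊆ U := by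
  intro g hg
  set g' : Vd d → A := fun v => if v ∈ S then f v else g v with hg'
  have hg'U : g' ∈ U := h (fun v hv => by simp [hg', hv])
  refine measurableSet_atom_invariant hU (g := g') ?_ hg'U
  intro v
  by_cases hv : v ∈ S
  · simpa [hg', hv] using hg v hv
  · simp [hg', hv, mem_atomOf_self]

lemma measure_ChatS (μ : Measure (Vd d → A)) (S : Finset (Vd d)) (f : Vd d → A) :
    μ (ChatS S f) = μ (cylS S f) := by
  refine le_antisymm ?_ (measure_mono (cylS_subset_ChatS S f))
  rw [measure_eq_iInf (cylS S f)]
  refine le_iInf fun t => le_iInf fun hst => le_iInf fun ht => ?_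
  exact measure_mono (ChatS_subset ht hst)

lemma restrict_ChatS (μ : Measure (Vd d → A)) [IsFiniteMeasure μ] (S : Finset (Vd d))
    (f : Vd d → A) : μ.restrict (ChatS S f) = μ.restrict (cylS S f) := by
  ext B hB
  rw [Measure.restrict_apply hB, Measure.restrict_apply hB]
  refine le_antisymm ?_ (measure_mono (Set.inter_subset_inter_right B (cylS_subset_ChatS S f)))
  have h1 : μ (B ∩ ChatS S f) + μ (ChatS S f \ B) = μ (ChatS S f) := by
    rw [Set.inter_comm]
    exact measure_inter_add_diff _ hB
  have h2 : μ (cylS S f) ≤ μ (B ∩ cylS S f) + μ (cylS S f \ B) := by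
    have hsub : cylS S f ⊆ (B ∩ cylS S f) ∪ (cylS S f \ B) := by
      intro x hx
      by_cases hxB : x ∈ B
      · exact Or.inl ⟨hxB, hx⟩
      · exact Or.inr ⟨hx, hxB⟩
    exact (measure_mono hsub).trans (measure_union_le _ _)
  have h3 : μ (cylS S f \ B) ≤ μ (ChatS S f \ B) :=
    measure_mono (Set.diff_subset_diff_left (cylS_subset_ChatS S f))
  have h4 : μ (B ∩ ChatS S f) + μ (ChatS S f \ B) ≤ μ (B ∩ cylS S f) + μ (ChatS S f \ B) := by
    calc μ (B ∩ ChatS S f) + μ (ChatS S f \ B) = μ (ChatS S f) := h1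
    _ = μ (cylS S f) := measure_ChatS μ S f
    _ ≤ μ (B ∩ cylS S f) + μ (cylS S f \ B) := h2
    _ ≤ μ (B ∩ cylS S f) + μ (ChatS S f \ B) := add_le_add_right h3 _
  exact (ENNReal.add_le_add_iff_right (measure_ne_top μ _)).mp h4

lemma cond_ChatS (μ : Measure (Vd d → A)) [IsFiniteMeasure μ] (S : Finset (Vd d))
    (f : Vd d → A) : μ[|ChatS S f] = μ[|cylS S f] := by
  rw [ProbabilityTheory.cond, ProbabilityTheory.cond, measure_ChatS μ S f,
    restrict_ChatS μ S f]

end Chat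

/-- additivity of (outer) measure along a finite measurable partition -/
lemma measure_inter_sum_eq {α ι : Type*} [MeasurableSpace α] (μ : Measure α) (I : Finset ι)
    (t : ι → Set α) (hm : ∀ i ∈ I, MeasurableSet (t i))
    (hd : ∀ i ∈ I, ∀ j ∈ I, i ≠ j → Disjoint (t i) (t j)) (M : Set α) :
    μ (M ∩ ⋃ i ∈ I, t i) = ∑ i ∈ I, μ (M ∩ t i) := by
  classical
  induction I using Finset.induction_on with
  | empty => simp
  | @insert a I ha ih =>
    have hmI : ∀ i ∈ I, MeasurableSet (t i) := fun i hi => hm i (Finset.mem_insert_of_mem hi)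
    have hdI : ∀ i ∈ I, ∀ j ∈ I, i ≠ j → Disjoint (t i) (t j) := fun i hi j hj =>
      hd i (Finset.mem_insert_of_mem hi) j (Finset.mem_insert_of_mem hj)
    have hta : MeasurableSet (t a) := hm a (Finset.mem_insert_self a I)
    have hU : (⋃ i ∈ insert a I, t i) = t a ∪ ⋃ i ∈ I, t i := by
      simp [Finset.set_biUnion_insert]
    have hdisj : ∀ i ∈ I, Disjoint (t a) (t i) := fun i hi =>
      hd a (Finset.mem_insert_self a I) i (Finset.mem_insert_of_mem hi)
        (fun h => ha (h ▸ hi))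
    rw [hU, Finset.sum_insert ha, ← ih hmI hdI]
    have key : μ (M ∩ (t a ∪ ⋃ i ∈ I, t i)) =
        μ ((M ∩ (t a ∪ ⋃ i ∈ I, t i)) ∩ t a) + μ ((M ∩ (t a ∪ ⋃ i ∈ I, t i)) \ t a) :=
      (measure_inter_add_diff _ hta).symm
    have e1 : (M ∩ (t a ∪ ⋃ i ∈ I, t i)) ∩ t a = M ∩ t a := by
      ext x; constructor
      · rintro ⟨⟨hxM, _⟩, hxa⟩; exact ⟨hxM, hxa⟩
      · rintro ⟨hxM, hxa⟩; exact ⟨⟨hxM, Or.inl hxa⟩, hxa⟩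
    have e2 : (M ∩ (t a ∪ ⋃ i ∈ I, t i)) \ t a = M ∩ ⋃ i ∈ I, t i := by
      ext x; constructor
      · rintro ⟨⟨hxM, hx⟩, hxa⟩
        rcases hx with hx | hx
        · exact absurd hx hxa
        · exact ⟨hxM, hx⟩
      · rintro ⟨hxM, hx⟩
        refine ⟨⟨hxM, Or.inr hx⟩, ?_⟩
        simp only [Set.mem_iUnion] at hx
        obtain ⟨i, hi, hxi⟩ := hx
        exact fun hxa => (hdisj i hi).le_bot ⟨hxa, hxi⟩

    rw [key, e1, e2]


lemma card_BoxFd (d n : ℕ) : (BoxFd d n).card = (2 * n + 1) ^ d := by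
  rw [BoxFd, Fintype.card_piFinset]
  have : (Finset.Icc (-(n : ℤ)) (n : ℤ)).card = 2 * n + 1 := by
    rw [Int.card_Icc]
    omega
  simp [this]

lemma BoxFd_mono (d : ℕ) {m n : ℕ} (h : m ≤ n) : BoxFd d m ⊆ BoxFd d n := by
  intro v hv
  rw [BoxFd, Fintype.mem_piFinset] at hv ⊢
  intro i
  have := hv i
  simp only [Finset.mem_Icc] at this ⊢
  omega

lemma card_BoxFd_pos (d n : ℕ) : 0 < (BoxFd d n).card := by
  rw [card_BoxFd]; positivity


-- MAIN quantitative lemma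
lemma key_estimate
    {d : ℕ} {A : Type*} [Fintype A] [MeasurableSpace A]
    (μ : Measure (Vd d → A)) (hprob : IsProbabilityMeasure μ)
    (ρ : ℕ → ℝ) (hρ : RateFunD ρ) (hLM : LocallyMixingOne μ ρ) :
    ∀ n m : ℕ, 1 ≤ m → m ≤ n → ∀ S : Finset (Vd d), (∀ v ∈ S, v ∉ BoxFd d n) →
      μ {f | μ (cylS S f) ≠ 0 ∧
          dbar (BoxFd d n) (μ[|cylS S f]) μ ≤
            Real.sqrt (ρ (n - m) +
              ((BoxFd d n).card - (BoxFd d m).card : ℝ) / (BoxFd d n).card)} ≥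
        ENNReal.ofReal (1 - Real.sqrt (ρ (n - m) +
          ((BoxFd d n).card - (BoxFd d m).card : ℝ) / (BoxFd d n).card)) := by
  intro n m hm hmn S hS
  have hn : 1 ≤ n := hm.trans hmn
  obtain ⟨π, hfst, hsnd, hindep, hbd⟩ := hLM n hn
  haveI hπprob : IsProbabilityMeasure π := by
    constructor
    have h1 : π.fst Set.univ = 1 := by rw [hfst]; exact measure_univ
    rwa [Measure.fst_apply MeasurableSet.univ, Set.preimage_univ] at h1
  have hπF : ∀ {t : Set (Vd d → A)}, MeasurableSet t → π (Prod.fst ⁻¹' t) = μ t := by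
    intro t ht; rw [← hfst, Measure.fst_apply ht]
  have hπB : ∀ {B : Set (Vd d → A)}, MeasurableSet B → π (Prod.snd ⁻¹' B) = μ B := by
    intro B hB; rw [← hsnd, Measure.snd_apply hB]
  -- numeric abbreviations
  set ε : ℝ := Real.sqrt (ρ (n - m) +
      ((BoxFd d n).card - (BoxFd d m).card : ℝ) / (BoxFd d n).card) with hεdef
  have hρ0 : 0 ≤ ρ (n - m) := hρ.2.1 _
  have hcn0 : (0:ℝ) < (BoxFd d n).card := by exact_mod_cast card_BoxFd_pos d n
  have hcmcn : ((BoxFd d m).card : ℝ) ≤ (BoxFd d n).card := by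
    exact_mod_cast Finset.card_le_card (BoxFd_mono d hmn)
  have hε20 : 0 ≤ ρ (n - m) +
      ((BoxFd d n).card - (BoxFd d m).card : ℝ) / (BoxFd d n).card := by
    have : (0:ℝ) ≤ ((BoxFd d n).card - (BoxFd d m).card : ℝ) / (BoxFd d n).card :=
      div_nonneg (by linarith) hcn0.le
    linarith
  have hε0 : 0 ≤ ε := Real.sqrt_nonneg _
  have hε2eq : ε ^ 2 = ρ (n - m) +
      ((BoxFd d n).card - (BoxFd d m).card : ℝ) / (BoxFd d n).card := Real.sq_sqrt hε20
  -- the classes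
  set Cl : (↥S → A) → Set (Vd d → A) :=
    (fun ζ => {g : Vd d → A | ∀ v : ↥S, g ↑v ∈ atomOf (ζ v)}) with hCldef
  set T : Finset (Set (Vd d → A)) := Finset.image Cl Finset.univ with hTdef
  have hClmeas : ∀ ζ, MeasurableSet (Cl ζ) := by
    intro ζ
    have : Cl ζ = ⋂ v : ↥S, (fun g : Vd d → A => g ↑v) ⁻¹' atomOf (ζ v) := by
      ext g; simp [hCldef]
    rw [this]
    exact MeasurableSet.iInter fun v => measurable_pi_apply _ (measurableSet_atomOf _)
  have hTmeas : ∀ t ∈ T, MeasurableSet t := by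
    intro t ht
    obtain ⟨ζ, _, rfl⟩ := Finset.mem_image.mp ht
    exact hClmeas ζ
  have hTdisj : ∀ t ∈ T, ∀ t' ∈ T, t ≠ t' → Disjoint t t' := by
    intro t ht t' ht' hne
    obtain ⟨ζ, _, rfl⟩ := Finset.mem_image.mp ht
    obtain ⟨ζ', _, rfl⟩ := Finset.mem_image.mp ht'
    rw [Set.disjoint_left]
    intro g hg hg'
    apply hne
    have hatom : ∀ v : ↥S, atomOf (ζ v) = atomOf (ζ' v) := by
      intro v
      rw [← atomOf_eq_of_mem (hg v), ← atomOf_eq_of_mem (hg' v)]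
    ext g''
    simp only [hCldef, Set.mem_setOf_eq]
    exact forall_congr' fun v => by rw [hatom v]
  have hcover : ∀ x : Vd d → A, x ∈ Cl (fun v => x ↑v) := fun x v => mem_atomOf_self _
  have hClChat : ∀ f : Vd d → A, Cl (fun v => f ↑v) = ChatS S f := by
    intro f; ext g
    simp only [hCldef, Set.mem_setOf_eq, ChatS]
    exact ⟨fun h v hv => h ⟨v, hv⟩, fun h v => h ↑v v.2⟩
  -- disagreement events
  set M : Vd d → Set ((Vd d → A) × (Vd d → A)) :=
    (fun v => {x | x.1 v ≠ x.2 v}) with hMdef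
  -- marginals of the conditioned coupling
  have hfst_cond : ∀ ζ, (π[|Prod.fst ⁻¹' (Cl ζ)]).fst = μ[|Cl ζ] := by
    intro ζ
    ext B hB
    rw [Measure.fst_apply hB, cond_apply ((hClmeas ζ).preimage measurable_fst) π,
      cond_apply (hClmeas ζ) μ]
    rw [hπF (hClmeas ζ), ← Set.preimage_inter, hπF ((hClmeas ζ).inter hB)]
  have hsnd_cond : ∀ ζ, μ (Cl ζ) ≠ 0 → (π[|Prod.fst ⁻¹' (Cl ζ)]).snd = μ := by
    intro ζ hζ
    have hS' : ∀ v : ↥S, (↑v : Vd d) ∈ (↑(BoxFd d n) : Set (Vd d))ᶜ := fun v => hS ↑v v.2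
    set D : Set (↥((↑(BoxFd d n) : Set (Vd d))ᶜ) → A) :=
      {h | ∀ v : ↥S, h ⟨↑v, hS' v⟩ ∈ atomOf (ζ v)} with hDdef
    have hDmeas : MeasurableSet D := by
      have : D = ⋂ v : ↥S,
          (fun h : ↥((↑(BoxFd d n) : Set (Vd d))ᶜ) → A => h ⟨↑v, hS' v⟩) ⁻¹' atomOf (ζ v) := by
        ext h; simp [hDdef]
      rw [this]
      exact MeasurableSet.iInter fun v => measurable_pi_apply _ (measurableSet_atomOf _)
    have hpre : Prod.fst ⁻¹' (Cl ζ) =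
        (fun (x : (Vd d → A) × (Vd d → A)) (v : ↥((↑(BoxFd d n) : Set (Vd d))ᶜ)) => x.1 ↑v) ⁻¹' D := by
      ext x; simp [hCldef, hDdef]
    ext B hB
    rw [Measure.snd_apply hB, cond_apply ((hClmeas ζ).preimage measurable_fst) π]
    have hind := (indepFun_iff_measure_inter_preimage_eq_mul.mp hindep) D B hDmeas hB
    rw [hpre, hind, hπB hB, ← mul_assoc, ENNReal.inv_mul_cancel, one_mul]
    · rw [← hpre, hπF (hClmeas ζ)]; exact hζ
    · exact measure_ne_top π _
  -- the average disagreement value of the conditioned coupling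
  set r : Set (Vd d → A) → ℝ := (fun t => ((BoxFd d n).card : ℝ)⁻¹ *
      ∑ v ∈ BoxFd d n, ((π[|Prod.fst ⁻¹' t]) (M v)).toReal) with hrdef
  have hr_nonneg : ∀ t, 0 ≤ r t := by
    intro t
    apply mul_nonneg (by positivity)
    exact Finset.sum_nonneg fun v _ => ENNReal.toReal_nonneg
  have hdbar_le : ∀ ζ, μ (Cl ζ) ≠ 0 → dbar (BoxFd d n) (μ[|Cl ζ]) μ ≤ r (Cl ζ) := by
    intro ζ hζ
    apply csInf_le
    · refine ⟨0, fun x hx => ?_⟩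
      obtain ⟨π', _, _, rfl⟩ := hx
      apply mul_nonneg (by positivity)
      exact Finset.sum_nonneg fun v _ => ENNReal.toReal_nonneg
    · exact ⟨π[|Prod.fst ⁻¹' (Cl ζ)], hfst_cond ζ, hsnd_cond ζ hζ, rfl⟩
  -- Markov computation
  have hterm : ∀ t ∈ T, ∀ v : Vd d, (μ t).toReal * ((π[|Prod.fst ⁻¹' t]) (M v)).toReal
      = (π (Prod.fst ⁻¹' t ∩ M v)).toReal := by
    intro t ht v
    by_cases h0 : μ t = 0
    · have hz : π (Prod.fst ⁻¹' t ∩ M v) = 0 := by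
        have hle : π (Prod.fst ⁻¹' t ∩ M v) ≤ π (Prod.fst ⁻¹' t) :=
          measure_mono Set.inter_subset_left
        rw [hπF (hTmeas t ht), h0] at hle
        exact le_antisymm hle (zero_le)
      simp [h0, hz]
    · rw [cond_apply ((hTmeas t ht).preimage measurable_fst) π, ← ENNReal.toReal_mul,
        ← mul_assoc, hπF (hTmeas t ht)]
      rw [ENNReal.mul_inv_cancel h0 (measure_ne_top μ _), one_mul]
  have hsum_v : ∀ v : Vd d, ∑ t ∈ T, (π (Prod.fst ⁻¹' t ∩ M v)).toReal = (π (M v)).toReal := by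
    intro v
    rw [← ENNReal.toReal_sum (fun t _ => measure_ne_top π _)]
    congr 1
    have hpt := measure_inter_sum_eq π T (fun t => Prod.fst ⁻¹' t)
      (fun t ht => (hTmeas t ht).preimage measurable_fst)
      (fun i hi j hj hij => (hTdisj i hi j hj hij).preimage _) (M v)
    have hcov : M v ∩ ⋃ t ∈ T, Prod.fst ⁻¹' t = M v := by
      rw [Set.inter_eq_left]
      intro x _
      simp only [Set.mem_iUnion]
      exact ⟨Cl (fun w => x.1 ↑w), Finset.mem_image_of_mem _ (Finset.mem_univ _), hcover x.1⟩
    rw [hcov] at hpt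
    rw [hpt]
    exact Finset.sum_congr rfl fun t _ => by rw [Set.inter_comm]
  have hsum_bd : ∑ v ∈ BoxFd d n, (π (M v)).toReal ≤
      ((BoxFd d m).card : ℝ) * ρ (n - m) +
        (((BoxFd d n).card : ℝ) - (BoxFd d m).card) := by
    rw [← Finset.sum_sdiff (BoxFd_mono d hmn)]
    have h1 : ∑ v ∈ BoxFd d m, (π (M v)).toReal ≤ ((BoxFd d m).card : ℝ) * ρ (n - m) := by
      calc ∑ v ∈ BoxFd d m, (π (M v)).toReal ≤ ∑ _v ∈ BoxFd d m, ρ (n - m) :=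
            Finset.sum_le_sum fun v hv =>
              ENNReal.toReal_le_of_le_ofReal (hρ.2.1 _) (hbd m hmn v hv)
        _ = ((BoxFd d m).card : ℝ) * ρ (n - m) := by rw [Finset.sum_const, nsmul_eq_mul]
    have h2 : ∑ v ∈ BoxFd d n \ BoxFd d m, (π (M v)).toReal ≤
        (((BoxFd d n).card : ℝ) - (BoxFd d m).card) := by
      calc ∑ v ∈ BoxFd d n \ BoxFd d m, (π (M v)).toReal
          ≤ ∑ _v ∈ BoxFd d n \ BoxFd d m, (1:ℝ) :=
            Finset.sum_le_sum fun v hv => by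
              refine ENNReal.toReal_le_of_le_ofReal zero_le_one ?_
              rw [ENNReal.ofReal_one]
              exact prob_le_one
        _ = ((BoxFd d n \ BoxFd d m).card : ℝ) := by rw [Finset.sum_const, nsmul_eq_mul, mul_one]
        _ = (((BoxFd d n).card : ℝ) - (BoxFd d m).card) := by
            rw [Finset.card_sdiff_of_subset (BoxFd_mono d hmn)]
            rw [Nat.cast_sub (Finset.card_le_card (BoxFd_mono d hmn))]
    linarith
  have hsum_r : ∑ t ∈ T, (μ t).toReal * r t ≤ ε ^ 2 := by
    have step1 : ∀ t ∈ T, (μ t).toReal * r t =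
        ((BoxFd d n).card : ℝ)⁻¹ * ∑ v ∈ BoxFd d n, (π (Prod.fst ⁻¹' t ∩ M v)).toReal := by
      intro t ht
      rw [hrdef]
      simp only []
      rw [← mul_assoc, mul_comm ((μ t).toReal), mul_assoc, Finset.mul_sum]
      congr 1
      exact Finset.sum_congr rfl fun v _ => hterm t ht v
    have step1' : ∑ t ∈ T, (μ t).toReal * r t = ((BoxFd d n).card : ℝ)⁻¹ *
        ∑ v ∈ BoxFd d n, ∑ t ∈ T, (π (Prod.fst ⁻¹' t ∩ M v)).toReal := by
      rw [Finset.sum_congr rfl step1, ← Finset.mul_sum, Finset.sum_comm]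
    rw [step1']
    have step2 : ((BoxFd d n).card : ℝ)⁻¹ *
        ∑ v ∈ BoxFd d n, ∑ t ∈ T, (π (Prod.fst ⁻¹' t ∩ M v)).toReal ≤
        ((BoxFd d n).card : ℝ)⁻¹ * (((BoxFd d m).card : ℝ) * ρ (n - m) +
          (((BoxFd d n).card : ℝ) - (BoxFd d m).card)) := by
      apply mul_le_mul_of_nonneg_left _ (by positivity)
      calc ∑ v ∈ BoxFd d n, ∑ t ∈ T, (π (Prod.fst ⁻¹' t ∩ M v)).toReal
          = ∑ v ∈ BoxFd d n, (π (M v)).toReal := Finset.sum_congr rfl fun v _ => hsum_v v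
        _ ≤ _ := hsum_bd
    refine step2.trans ?_
    rw [hε2eq]
    have hexp : ((BoxFd d n).card : ℝ)⁻¹ * (((BoxFd d m).card : ℝ) * ρ (n - m) +
          (((BoxFd d n).card : ℝ) - (BoxFd d m).card)) =
        (((BoxFd d m).card : ℝ) / (BoxFd d n).card) * ρ (n - m) +
          (((BoxFd d n).card : ℝ) - (BoxFd d m).card) / (BoxFd d n).card := by
      field_simp
    rw [hexp]
    have hfrac : (((BoxFd d m).card : ℝ) / (BoxFd d n).card) ≤ 1 := by
      rw [div_le_one hcn0]; exact hcmcn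
    nlinarith [hρ0]
  -- the bad classes
  set Tbad : Finset (Set (Vd d → A)) :=
    T.filter (fun t => μ t ≠ 0 ∧ ε < dbar (BoxFd d n) (μ[|t]) μ) with hTbaddef
  have hdbar_le' : ∀ t ∈ T, μ t ≠ 0 → dbar (BoxFd d n) (μ[|t]) μ ≤ r t := by
    intro t ht h0
    obtain ⟨ζ, _, rfl⟩ := Finset.mem_image.mp ht
    exact hdbar_le ζ h0
  have hbadsum : ∑ t ∈ Tbad, (μ t).toReal ≤ ε := by
    rcases Finset.eq_empty_or_nonempty Tbad with hbe | ⟨t₀, ht₀⟩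
    · rw [hbe]; simpa using hε0
    · have ht₀' := Finset.mem_filter.mp ht₀
      have hεpos : 0 < ε := by
        rcases hε0.lt_or_eq with h | h
        · exact h
        · exfalso
          have hw : 0 < (μ t₀).toReal :=
            ENNReal.toReal_pos ht₀'.2.1 (measure_ne_top μ _)
          have hrpos : 0 < r t₀ := by
            have := hdbar_le' t₀ ht₀'.1 ht₀'.2.1
            have h2 := ht₀'.2.2
            rw [← h] at h2
            linarith
          have hpos : 0 < (μ t₀).toReal * r t₀ := mul_pos hw hrpos
          have hle : (μ t₀).toReal * r t₀ ≤ ∑ t ∈ T, (μ t).toReal * r t :=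
            Finset.single_le_sum (fun t _ => mul_nonneg ENNReal.toReal_nonneg (hr_nonneg t))
              ht₀'.1
          rw [← h] at hε2eq
          nlinarith [hsum_r]
      have h1 : ∀ t ∈ Tbad, ε * (μ t).toReal ≤ (μ t).toReal * r t := by
        intro t ht
        have ht' := Finset.mem_filter.mp ht
        have hεr : ε ≤ r t := (le_of_lt ht'.2.2).trans (hdbar_le' t ht'.1 ht'.2.1)
        rw [mul_comm ε _]
        exact mul_le_mul_of_nonneg_left hεr ENNReal.toReal_nonneg
      have h2 : ε * ∑ t ∈ Tbad, (μ t).toReal ≤ ε ^ 2 := by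
        rw [Finset.mul_sum]
        calc ∑ t ∈ Tbad, ε * (μ t).toReal ≤ ∑ t ∈ Tbad, (μ t).toReal * r t :=
              Finset.sum_le_sum h1
          _ ≤ ∑ t ∈ T, (μ t).toReal * r t := by
              apply Finset.sum_le_sum_of_subset_of_nonneg (Finset.filter_subset _ _)
              intro t _ _
              exact mul_nonneg ENNReal.toReal_nonneg (hr_nonneg t)
          _ ≤ ε ^ 2 := hsum_r
      have h3 : ε * ∑ t ∈ Tbad, (μ t).toReal ≤ ε * ε := h2.trans (le_of_eq (pow_two ε))
      exact le_of_mul_le_mul_left h3 hεpos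
  have hbadsum' : ∑ t ∈ Tbad, μ t ≤ ENNReal.ofReal ε := by
    have hne : ∑ t ∈ Tbad, μ t ≠ ⊤ :=
      (ENNReal.sum_lt_top.mpr fun t _ => measure_lt_top μ t).ne
    rw [ENNReal.le_ofReal_iff_toReal_le hne hε0, ENNReal.toReal_sum
      (fun t _ => measure_ne_top μ _)]
    exact hbadsum
  -- covering the bad event
  set G : Set (Vd d → A) := {f | μ (cylS S f) ≠ 0 ∧
      dbar (BoxFd d n) (μ[|cylS S f]) μ ≤ ε} with hGdef
  have hGc : Gᶜ ⊆ (⋃ t ∈ T.filter (fun t => μ t = 0), t) ∪ ⋃ t ∈ Tbad, t := by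
    intro f hf
    simp only [hGdef, Set.mem_compl_iff, Set.mem_setOf_eq, not_and, not_le] at hf
    have hfC : f ∈ Cl (fun v => f ↑v) := hcover f
    have hmemT : Cl (fun v => f ↑v) ∈ T := Finset.mem_image_of_mem _ (Finset.mem_univ _)
    have hCl_eq : Cl (fun v => f ↑v) = ChatS S f := hClChat f
    by_cases h0 : μ (cylS S f) = 0
    · left
      refine Set.mem_biUnion (Finset.mem_filter.mpr ⟨hmemT, ?_⟩) hfC
      rw [hCl_eq, measure_ChatS μ S f]; exact h0
    · right
      refine Set.mem_biUnion (Finset.mem_filter.mpr ⟨hmemT, ?_, ?_⟩) hfC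
      · rw [hCl_eq, measure_ChatS μ S f]; exact h0
      · rw [hCl_eq, cond_ChatS μ S f]; exact hf h0
  have hGcbound : μ Gᶜ ≤ ENNReal.ofReal ε := by
    refine (measure_mono hGc).trans ?_
    refine (measure_union_le _ _).trans ?_
    have hz : μ (⋃ t ∈ T.filter (fun t => μ t = 0), t) = 0 := by
      refine measure_biUnion_null_iff ?_ |>.mpr ?_
      · exact (T.filter _).countable_toSet
      · intro t ht
        exact (Finset.mem_filter.mp ht).2
    rw [hz, zero_add]
    refine (measure_biUnion_finset_le Tbad id).trans ?_
    simpa using hbadsum'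
  -- conclusion
  have huniv : (1:ℝ≥0∞) ≤ μ G + μ Gᶜ := by
    have : μ Set.univ = 1 := measure_univ
    rw [← this, ← Set.union_compl_self G]
    exact measure_union_le _ _
  rw [ge_iff_le, ENNReal.ofReal_sub _ hε0, ENNReal.ofReal_one, tsub_le_iff_right]
  calc (1:ℝ≥0∞) ≤ μ G + μ Gᶜ := huniv
    _ ≤ μ G + ENNReal.ofReal ε := add_le_add_right hGcbound _


lemma folner_of_key
    {d : ℕ} {A : Type*} [Fintype A] [MeasurableSpace A]
    (μ : Measure (Vd d → A)) (hprob : IsProbabilityMeasure μ)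
    (ρ : ℕ → ℝ) (hρ : RateFunD ρ) (hLM : LocallyMixingOne μ ρ) : FolnerIndep μ := by
  intro ε hε
  have hε2 : (0:ℝ) < ε ^ 2 / 2 := by positivity
  have hε2' : (0:ℝ) < ε ^ 2 := by positivity
  have hev : ∀ᶠ k in atTop, ρ k < ε ^ 2 / 2 :=
    Filter.Tendsto.eventually_lt_const hε2 hρ.2.2
  obtain ⟨K, hK⟩ := eventually_atTop.mp hev
  refine ⟨max (K + 1) (⌈(2 * d * K : ℝ) / ε ^ 2⌉₊ + 1), ?_⟩
  intro n hn S hSd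
  have hnK : K + 1 ≤ n := le_trans (le_max_left _ _) hn
  have hnceil : (⌈(2 * d * K : ℝ) / ε ^ 2⌉₊ + 1) ≤ n := le_trans (le_max_right _ _) hn
  set m := n - K with hmdef
  have hm1 : 1 ≤ m := by omega
  have hmn : m ≤ n := by omega
  have hnm : n - m = K := by omega
  -- real quantities
  set a : ℝ := (2 * n + 1 : ℝ) with hadef
  set b : ℝ := (2 * m + 1 : ℝ) with hbdef
  have ha0 : 0 < a := by positivity
  have hb0 : 0 < b := by positivity
  have hba : b ≤ a := by
    have : (m:ℝ) ≤ n := by exact_mod_cast hmn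
    simp only [hadef, hbdef]; linarith
  have hcn : ((BoxFd d n).card : ℝ) = a ^ d := by
    rw [card_BoxFd]; push_cast; rfl
  have hcm : ((BoxFd d m).card : ℝ) = b ^ d := by
    rw [card_BoxFd]; push_cast; rfl
  have hab : a - b = 2 * K := by
    have : (m:ℝ) = (n:ℝ) - K := by
      rw [hmdef]; push_cast [Nat.cast_sub (by omega : K ≤ n)]; ring
    simp only [hadef, hbdef]; rw [this]; ring
  -- the gap bound
  have hgap : ((BoxFd d n).card - (BoxFd d m).card : ℝ) / (BoxFd d n).card < ε ^ 2 / 2 := by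
    rw [hcn, hcm]
    have hpow : 1 + (d:ℝ) * (b / a - 1) ≤ (b / a) ^ d := by
      have h2 : (-2:ℝ) ≤ b / a - 1 := by
        have : 0 < b / a := div_pos hb0 ha0
        linarith
      simpa using one_add_mul_le_pow h2 d
    have hratio : (a ^ d - b ^ d) / a ^ d = 1 - (b / a) ^ d := by
      rw [div_pow]
      field_simp
    rw [hratio]
    have hba' : 1 - b / a = (2 * K) / a := by
      rw [← hab]; field_simp
    have h1 : 1 - (b / a) ^ d ≤ (d:ℝ) * ((2 * K) / a) := by
      rw [← hba']; nlinarith [hpow]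
    have h5 : (2 * d * K : ℝ) < n * ε ^ 2 := by
      have hgt : (2 * d * K : ℝ) / ε ^ 2 < n := by
        have h3 : (2 * d * K : ℝ) / ε ^ 2 ≤ ⌈(2 * d * K : ℝ) / ε ^ 2⌉₊ := Nat.le_ceil _
        have h4 : (⌈(2 * d * K : ℝ) / ε ^ 2⌉₊ : ℝ) < n := by exact_mod_cast hnceil
        linarith
      exact (div_lt_iff₀ hε2').mp hgt
    have ha2n : 2 * (n:ℝ) ≤ a := by simp only [hadef]; linarith
    have h2 : (d:ℝ) * ((2 * K) / a) < ε ^ 2 / 2 := by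
      have he : (d:ℝ) * ((2 * K) / a) = (2 * d * K) / a := by ring
      rw [he, div_lt_iff₀ ha0]
      nlinarith [h5, ha2n, hε2]
    linarith
  have hρK : ρ (n - m) < ε ^ 2 / 2 := by
    rw [hnm]; exact hK K le_rfl
  have hρnm0 : 0 ≤ ρ (n - m) := hρ.2.1 _
  have hε' : Real.sqrt (ρ (n - m) +
      ((BoxFd d n).card - (BoxFd d m).card : ℝ) / (BoxFd d n).card) < ε := by
    rw [Real.sqrt_lt' hε]
    linarith
  have hkey := key_estimate μ hprob ρ hρ hLM n m hm1 hmn S hSd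
  refine le_trans (ENNReal.ofReal_le_ofReal (by linarith)) (le_trans hkey (measure_mono ?_))
  intro f hf
  exact ⟨hf.1, lt_of_le_of_lt hf.2 hε'⟩


/-- A translation-invariant locally mixing measure satisfies the
quantitative conditional `d̄`-estimate, and consequently is Følner independent. -/
theorem locally_mixing_implies_folner_independent
    {d : ℕ} (hd : 1 ≤ d) {A : Type*} [Fintype A] [MeasurableSpace A]
    (μ : Measure (Vd d → A)) (hprob : IsProbabilityMeasure μ)
    (hinv : ∀ u : Vd d, μ.map (shiftD u) = μ)
    (ρ : ℕ → ℝ) (hρ : RateFunD ρ) (hLM : LocallyMixingOne μ ρ) :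
    (∀ n m : ℕ, 1 ≤ m → m ≤ n → ∀ S : Finset (Vd d), (∀ v ∈ S, v ∉ BoxFd d n) →
      μ {f | μ (cylS S f) ≠ 0 ∧
          dbar (BoxFd d n) (μ[|cylS S f]) μ ≤
            Real.sqrt (ρ (n - m) +
              ((BoxFd d n).card - (BoxFd d m).card : ℝ) / (BoxFd d n).card)} ≥
        ENNReal.ofReal (1 - Real.sqrt (ρ (n - m) +
          ((BoxFd d n).card - (BoxFd d m).card : ℝ) / (BoxFd d n).card))) ∧
    FolnerIndep μ :=
  ⟨key_estimate μ hprob ρ hρ hLM, folner_of_key μ hprob ρ hρ hLM⟩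
end

section
/- Let D be a domain containing the origin and let h be sampled from φ^0_D, with essential level loops L_0,…,L_M and heights H_0 = 0, H_1, …, H_M. Then, conditioned on the sequence of loops (L_0,…,L_M) (in particular on M), the increments H_{m+1} − H_m for 0 ≤ m ≤ M−1 are independent and each uniformly distributed on {−2, +2}; equivalently, conditioned on M, the sequence (H_m/2)_{m=0}^M is an M-step simple symmetric random walk started from 0. -/
open MeasureTheory ProbabilityTheory Filter
open scoped Classical

/-- The square lattice `ℤ²`. -/
abbrev V2 := ℤ × ℤ

/-- Nearest-neighbor adjacency in `ℤ²`. -/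
def Adj2 (u v : V2) : Prop := |u.1 - v.1| + |u.2 - v.2| = 1

/-- Diagonal (`×`-) adjacency: Euclidean distance `√2`. -/
def XAdj (u v : V2) : Prop := |u.1 - v.1| = 1 ∧ |u.2 - v.2| = 1

/-- A vertex is even if the sum of its coordinates is even. -/
def EvenV (v : V2) : Prop := Even (v.1 + v.2)

/-- Internal vertex boundary of `D`. -/
def bdry (D : Set V2) : Set V2 := {v | v ∈ D ∧ ∃ u, Adj2 u v ∧ u ∉ D}

/-- Connectivity of a set under a relation, via paths staying in the set. -/
def ConnIn (R : V2 → V2 → Prop) (S : Set V2) : Prop :=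
  ∀ x ∈ S, ∀ y ∈ S, ∃ (m : ℕ) (p : ℕ → V2),
    p 0 = x ∧ p m = y ∧ (∀ i ≤ m, p i ∈ S) ∧ ∀ i < m, R (p i) (p (i + 1))

/-- `D ⊆ ℤ²` is simply connected. -/
def SimplyConnected (D : Set V2) : Prop := ConnIn Adj2 D ∧ ConnIn Adj2 Dᶜ

/-- A height function on `D`: gradients of absolute value one along edges of `D`, even
values at even vertices of `D` (and the junk value `0` outside `D`). -/
def HeightOn (D : Set V2) (h : V2 → ℤ) : Prop :=
  (∀ u ∈ D, ∀ v ∈ D, Adj2 u v → |h u - h v| = 1) ∧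
  (∀ v ∈ D, EvenV v → Even (h v)) ∧ (∀ v ∉ D, h v = 0)

/-- A domain: a finite simply connected subset of `ℤ²` whose internal boundary consists of
even vertices. -/
def IsDomain2 (D : Set V2) : Prop :=
  D.Finite ∧ SimplyConnected D ∧ ∀ v ∈ bdry D, EvenV v

/-- The uniform measure on height functions on `D` equal to `τ` on `∂D`. -/
noncomputable def phiT (D : Set V2) (τ : V2 → ℤ) : Measure (V2 → ℤ) :=
  uniformOn {h | HeightOn D h ∧ ∀ v ∈ bdry D, h v = τ v}

/-- The uniform measure `φ^c_D` on height functions on `D` equal to `c` on `∂D`. -/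
noncomputable def phiBC (D : Set V2) (c : ℤ) : Measure (V2 → ℤ) := phiT D fun _ => c

/-- The box `Λ_n = [-n,n]² ∩ ℤ²`. -/
def BoxZ (n : ℕ) : Set V2 := {v | |v.1| ≤ (n : ℤ) ∧ |v.2| ≤ (n : ℤ)}

/-- The box `Λ_r` of real radius `r`. -/
def BoxR (r : ℝ) : Set V2 := {v | |(v.1 : ℝ)| ≤ r ∧ |(v.2 : ℝ)| ≤ r}

/-- The annulus `A_{m,n} = Λ_n ∖ Λ_m` (integer radii). -/
def AnnZ (m n : ℕ) : Set V2 := BoxZ n \ BoxZ m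

/-- The annulus `A_{r,R} = Λ_R ∖ Λ_r` (real radii). -/
def AnnR (r R : ℝ) : Set V2 := BoxR R \ BoxR r

/-- A `×`-loop, described by its vertex set: a finite nonempty `×`-connected set in which
every vertex has exactly two `×`-neighbors. -/
def IsXLoop (L : Set V2) : Prop :=
  L.Finite ∧ L.Nonempty ∧ ConnIn XAdj L ∧ ∀ v ∈ L, {u ∈ L | XAdj u v}.ncard = 2

/-- The bounded region enclosed by `L` (not including `L`): the set of vertices outside `L`
whose nearest-neighbor connected component in the complement of `L` is finite. -/
def Inside (L : Set V2) : Set V2 :=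
  {x | x ∉ L ∧ Set.Finite {y | ∃ (m : ℕ) (p : ℕ → V2),
    p 0 = x ∧ p m = y ∧ (∀ i ≤ m, p i ∉ L) ∧ ∀ i < m, Adj2 (p i) (p (i + 1))}}

/-- `L` surrounds `S`: `S` lies in the bounded region enclosed by `L`. -/
def Surrounds (L S : Set V2) : Prop := S ⊆ Inside L

/-- The region enclosed by `L`, including `L` itself. -/
def Encl (L : Set V2) : Set V2 := L ∪ Inside L

/-- A level loop of `h` of height `c`: a `×`-loop on which `h` is constantly `c`. -/
def LevelLoop (h : V2 → ℤ) (L : Set V2) (c : ℤ) : Prop :=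
  IsXLoop L ∧ ∀ v ∈ L, h v = c

/-- The successor relation in the construction of essential level loops: `L` is a level
loop of height `H`, surrounding the origin, lying strictly inside the region enclosed by
the previous loop `Lm`, with `|H - Hm| = 2`. -/
def NextLoop (h : V2 → ℤ) (Lm : Set V2) (Hm : ℤ) (L : Set V2) (H : ℤ) : Prop :=
  LevelLoop h L H ∧ L ⊆ Inside Lm ∧ Surrounds L {((0 : ℤ), (0 : ℤ))} ∧ |H - Hm| = 2

/-- `(L_0, …, L_M)` with heights `(H_0, …, H_M)` is the sequence of essential level loops
of `h` in the domain `D`: `L_0 = ∂D` with `H_0 = 0`, each `L_{m+1}` is the outermost level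
loop surrounding the origin inside the region enclosed by `L_m` whose height differs by
`±2`, and no such loop exists inside `L_M`. -/
def EssSeq (D : Set V2) (h : V2 → ℤ) (M : ℕ) (L : ℕ → Set V2) (H : ℕ → ℤ) : Prop :=
  L 0 = bdry D ∧ H 0 = 0 ∧
  (∀ m < M, NextLoop h (L m) (H m) (L (m + 1)) (H (m + 1)) ∧
    ∀ L' H', NextLoop h (L m) (H m) L' H' → Encl L' ⊆ Encl (L (m + 1))) ∧
  ∀ L' H', ¬ NextLoop h (L M) (H M) L' H'

/-- The set of height functions on `D` obeying the boundary condition `(B, κ)`. -/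
def HomSet (D B : Set V2) (κ : V2 → Set ℤ) : Set (V2 → ℤ) :=
  {h | HeightOn D h ∧ ∀ v ∈ B, h v ∈ κ v}

/-- Admissibility of the boundary condition `(B, κ)`. -/
def Admissible (D B : Set V2) (κ : V2 → Set ℤ) : Prop :=
  (HomSet D B κ).Nonempty ∧ (HomSet D B κ).Finite

/-- The uniform measure `φ^{B,κ}_D` on height functions obeying `(B, κ)`. -/
noncomputable def phiK (D B : Set V2) (κ : V2 → Set ℤ) : Measure (V2 → ℤ) :=
  uniformOn (HomSet D B κ)

def Reach (L : Set V2) (x : V2) : Set V2 :=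
  {y | ∃ (m : ℕ) (p : ℕ → V2),
    p 0 = x ∧ p m = y ∧ (∀ i ≤ m, p i ∉ L) ∧ ∀ i < m, Adj2 (p i) (p (i + 1))}

lemma mem_inside_iff {L : Set V2} {x : V2} : x ∈ Inside L ↔ x ∉ L ∧ (Reach L x).Finite :=
  Iff.rfl

lemma adj2_symm {u v : V2} (h : Adj2 u v) : Adj2 v u := by
  unfold Adj2 at *; rw [abs_sub_comm, abs_sub_comm v.2]; exact h

lemma reach_self {L : Set V2} {x : V2} (hx : x ∉ L) : x ∈ Reach L x :=
  ⟨0, fun _ => x, rfl, rfl, fun _ _ => hx, fun i hi => absurd hi (Nat.not_lt_zero i)⟩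

lemma reach_notL {L : Set V2} {x y : V2} (hy : y ∈ Reach L x) : y ∉ L := by
  obtain ⟨m, p, h0, hm, hmem, _⟩ := hy
  exact hm ▸ hmem m le_rfl

lemma reach_start_notL {L : Set V2} {x y : V2} (hy : y ∈ Reach L x) : x ∉ L := by
  obtain ⟨m, p, h0, hm, hmem, _⟩ := hy
  exact h0 ▸ hmem 0 (Nat.zero_le m)

lemma reach_step {L : Set V2} {x y : V2} (hx : x ∉ L) (hy : y ∉ L) (hadj : Adj2 x y) :
    y ∈ Reach L x := by
  refine ⟨1, fun i => if i = 0 then x else y, by simp, by simp, ?_, ?_⟩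
  · intro i _; by_cases hi : i = 0 <;> simp [hi, hx, hy]
  · intro i hi; interval_cases i; simpa using hadj

lemma reach_trans {L : Set V2} {x y z : V2} (hy : y ∈ Reach L x) (hz : z ∈ Reach L y) :
    z ∈ Reach L x := by
  obtain ⟨m, p, hp0, hpm, hpmem, hpstep⟩ := hy
  obtain ⟨n, q, hq0, hqn, hqmem, hqstep⟩ := hz
  refine ⟨m + n, fun i => if i < m then p i else q (i - m), ?_, ?_, ?_, ?_⟩
  · by_cases hm : 0 < m
    · simp [hm, hp0]
    · have hm0 : m = 0 := by omega
      subst hm0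
      simp [hq0, ← hpm, hp0]
  · have : ¬ m + n < m := by omega
    simp [this, hqn]
  · intro i hi
    by_cases h : i < m
    · simp only [h, if_pos]; exact hpmem i h.le
    · simp only [h, if_neg]; exact hqmem (i - m) (by omega)
  · intro i hi
    by_cases h1 : i + 1 < m
    · have h0 : i < m := by omega
      simp only [h0, h1, if_pos]; exact hpstep i h0
    · by_cases h0 : i < m
      · have em : i + 1 = m := by omega
        subst em
        have e1 : i < i + 1 := Nat.lt_succ_self i
        show Adj2 (if i < i + 1 then p i else q (i - (i + 1)))
          (if i + 1 < i + 1 then p (i + 1) else q (i + 1 - (i + 1)))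
        rw [if_pos e1, if_neg (Nat.lt_irrefl (i + 1)), Nat.sub_self, hq0, ← hpm]
        exact hpstep i e1
      · have e1 : ¬ i < m := h0
        simp only [e1, h1, if_neg]
        have : i - m + 1 = i + 1 - m := by omega
        rw [← this]
        exact hqstep (i - m) (by omega)

lemma reach_symm {L : Set V2} {x y : V2} (hy : y ∈ Reach L x) : x ∈ Reach L y := by
  obtain ⟨m, p, hp0, hpm, hpmem, hpstep⟩ := hy
  refine ⟨m, fun i => p (m - i), by simpa [hpm], by simpa [hp0], ?_, ?_⟩
  · intro i _; exact hpmem (m - i) (by omega)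
  · intro i hi
    have hk : m - i - 1 < m := by omega
    have e : m - i - 1 + 1 = m - i := by omega
    have := hpstep (m - i - 1) hk
    rw [e] at this
    have e2 : m - (i + 1) = m - i - 1 := by omega
    show Adj2 (p (m - i)) (p (m - (i+1)))
    rw [e2]
    exact adj2_symm this

lemma reach_eq {L : Set V2} {x y : V2} (hy : y ∈ Reach L x) : Reach L y = Reach L x := by
  apply Set.eq_of_subset_of_subset
  · exact fun z hz => reach_trans hy hz
  · exact fun z hz => reach_trans (reach_symm hy) hz

lemma inside_step {L : Set V2} {u v : V2} (hu : u ∈ Inside L) (hv : v ∉ L)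
    (hadj : Adj2 u v) : v ∈ Inside L := by
  obtain ⟨huL, hfin⟩ := hu
  refine ⟨hv, ?_⟩
  have := reach_eq (reach_step huL hv hadj)
  show (Reach L v).Finite
  rw [this]
  exact hfin

lemma inside_notL {L : Set V2} {x : V2} (hx : x ∈ Inside L) : x ∉ L := hx.1

lemma not_inside_iff {L : Set V2} {x : V2} (hx : x ∉ L) :
    x ∉ Inside L ↔ (Reach L x).Infinite := by
  rw [mem_inside_iff]; exact ⟨fun h hf => h ⟨hx, hf⟩, fun h hf => h hf.2⟩

lemma exists_cross (P : V2 → Prop) (p : ℕ → V2) :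
    ∀ n, P (p 0) → ¬ P (p n) → ∃ i < n, P (p i) ∧ ¬ P (p (i + 1)) := by
  intro n
  induction n with
  | zero => intro h0 hn; exact absurd h0 hn
  | succ k ih =>
    intro h0 hn
    by_cases hk : P (p k)
    · exact ⟨k, Nat.lt_succ_self k, hk, hn⟩
    · obtain ⟨i, hi, h1, h2⟩ := ih h0 hk
      exact ⟨i, hi.trans (Nat.lt_succ_self k), h1, h2⟩

lemma lemmaN {L L' : Set V2} (h : L' ⊆ Inside L) : Encl L' ⊆ Encl L := by
  intro x hx
  rcases hx with hx | hx
  · exact Or.inr (h hx)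
  · by_contra hxE
    have hxL : x ∉ L := fun hc => hxE (Or.inl hc)
    have hxI : x ∉ Inside L := fun hc => hxE (Or.inr hc)
    have hinf : (Reach L x).Infinite := (not_inside_iff hxL).mp hxI
    have hsub : Reach L x ⊆ Reach L' x := by
      rintro y ⟨m, p, hp0, hpm, hpmem, hpstep⟩
      refine ⟨m, p, hp0, hpm, ?_, hpstep⟩
      intro i hi
      have hpi : p i ∈ Reach L x :=
        ⟨i, p, hp0, rfl, fun j hj => hpmem j (hj.trans hi), fun j hj => hpstep j (by omega)⟩
      have h1 : p i ∉ L := reach_notL hpi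
      have h2 : (Reach L (p i)).Infinite := by rw [reach_eq hpi]; exact hinf
      have h3 : p i ∉ Inside L := by
        rw [not_inside_iff h1]; exact h2
      exact fun hc => h3 (h hc)
    have : (Reach L' x).Infinite := hinf.mono hsub
    exact this hx.2

-- NEW PART

lemma ext_lemma {L L'' : Set V2} (hE : (Encl L).Finite) (hne : L.Nonempty)
    (h'' : L'' ⊆ Inside L) : ∃ a ∈ L, a ∉ Inside L'' := by
  obtain ⟨a, haE, hamax⟩ := hE.exists_maximalFor Prod.fst _ (hne.mono Set.subset_union_left)
  set b : V2 := (a.1 + 1, a.2) with hb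
  have hbE : b ∉ Encl L := by
    intro hbE
    have := hamax hbE (by simp [hb])
    simp [hb] at this
  have hbL : b ∉ L := fun hc => hbE (Or.inl hc)
  have hadj : Adj2 a b := by simp [Adj2, hb]
  have haL : a ∈ L := by
    rcases haE with h | h
    · exact h
    · exact absurd (Or.inr (inside_step h hbL hadj)) hbE
  refine ⟨a, haL, ?_⟩
  have haL'' : a ∉ L'' := fun hc => (inside_notL (h'' hc)) haL
  have hbL'' : b ∉ L'' := fun hc => hbE (Or.inr (h'' hc))
  have hbI'' : b ∉ Inside L'' := fun hc => hbE (lemmaN h'' (Or.inr hc))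
  have hinf : (Reach L'' b).Infinite := (not_inside_iff hbL'').mp hbI''
  intro hins
  exact (not_inside_iff hbL'').mpr hinf (inside_step hins hbL'' hadj)

lemma conn_compl_reach {D L'' : Set V2} (hD : IsDomain2 D) (hL : L'' ⊆ D) {u : V2}
    (hu : u ∉ D) : (Reach L'' u).Infinite := by
  have hsub : Dᶜ ⊆ Reach L'' u := by
    intro y hy
    obtain ⟨m, p, h0, hm, hmem, hstep⟩ := hD.2.1.2 u hu y hy
    exact ⟨m, p, h0, hm, fun i hi hc => hmem i hi (hL hc), hstep⟩
  exact (hD.1.infinite_compl).mono hsub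

lemma bdry_not_inside {D L'' : Set V2} (hD : IsDomain2 D) (hL : L'' ⊆ D) {x : V2}
    (hx : x ∈ bdry D) (hxL : x ∉ L'') : x ∉ Inside L'' := by
  obtain ⟨hxD, u, hadj, hu⟩ := hx
  have huL : u ∉ L'' := fun hc => hu (hL hc)
  have hinf := conn_compl_reach hD hL hu
  intro hins
  exact (not_inside_iff huL).mpr hinf (inside_step hins huL (adj2_symm hadj))

lemma inside_bdry_subset {D : Set V2} (hD : IsDomain2 D) : Inside (bdry D) ⊆ D := by
  intro x hx
  by_contra hxD
  exact (not_inside_iff hx.1).mpr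
    (conn_compl_reach hD (fun v hv => hv.1) hxD) hx

section EssFacts
variable {D : Set V2} {h : V2 → ℤ} {M : ℕ} {L : ℕ → Set V2} {H : ℕ → ℤ}

lemma essFacts (hD : IsDomain2 D) (hB : ∀ v ∈ bdry D, h v = 0)
    (hE : EssSeq D h M L H) :
    ∀ j ≤ M, (∀ v ∈ L j, h v = H j) ∧ Encl (L j) ⊆ D := by
  intro j
  induction j with
  | zero =>
    intro _
    constructor
    · intro v hv; rw [hE.1] at hv; rw [hB v hv, hE.2.1]
    · rw [hE.1]
      rintro x (hx | hx)
      · exact hx.1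
      · exact inside_bdry_subset hD hx
  | succ k ih =>
    intro hk
    have hk' : k < M := hk
    have NL := (hE.2.2.1 k hk').1
    obtain ⟨_, ihE⟩ := ih (le_of_lt hk')
    exact ⟨NL.1.2, (lemmaN NL.2.1).trans ihE⟩

lemma encl_chain (hE : EssSeq D h M L H) :
    ∀ a b, a ≤ b → b ≤ M → Encl (L b) ⊆ Encl (L a) := by
  intro a b hab
  induction b, hab using Nat.le_induction with
  | base => intro _; exact subset_rfl
  | succ b hab ih =>
    intro hbM
    have NL := (hE.2.2.1 b hbM).1
    exact (lemmaN NL.2.1).trans (ih (by omega))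

lemma H_even_of_ess (hE : EssSeq D h M L H) : ∀ j ≤ M, Even (H j) := by
  intro j
  induction j with
  | zero => intro _; rw [hE.2.1]; exact ⟨0, by norm_num⟩
  | succ k ih =>
    intro hk
    have hk' : k < M := hk
    have hd := (hE.2.2.1 k hk').1.2.2.2
    rcases (abs_eq (by norm_num : (0:ℤ) ≤ 2)).mp hd with he | he
    · obtain ⟨r, hr⟩ := ih (le_of_lt hk')
      exact ⟨r + 1, by omega⟩
    · obtain ⟨r, hr⟩ := ih (le_of_lt hk')
      exact ⟨r - 1, by omega⟩

lemma f4 (hD : IsDomain2 D) (hH : HeightOn D h) (hB : ∀ v ∈ bdry D, h v = 0)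
    (hE : EssSeq D h M L H) :
    ∀ j < M, ∀ x ∈ L j, x ∉ Inside (L (j + 1)) := by
  intro j hj x hx
  have NL := (hE.2.2.1 j hj).1
  have hDj1 : L (j + 1) ⊆ D :=
    Set.subset_union_left.trans (essFacts hD hB hE (j + 1) hj).2
  rcases Nat.eq_zero_or_pos j with h0 | hpos
  · subst h0
    have hxb : x ∈ bdry D := hE.1 ▸ hx
    have hxL1 : x ∉ L 1 := fun hc => (inside_notL (NL.2.1 hc)) hx
    exact bdry_not_inside hD hDj1 hxb hxL1
  · have hj1 : j - 1 + 1 = j := by omega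
    have XL : IsXLoop (L j) := by
      have := (hE.2.2.1 (j - 1) (by omega)).1.1.1
      rwa [hj1] at this
    have hDj : L j ⊆ D :=
      Set.subset_union_left.trans (essFacts hD hB hE j (le_of_lt hj)).2
    have hEncl : (Encl (L j)).Finite := hD.1.subset (essFacts hD hB hE j (le_of_lt hj)).2
    obtain ⟨a, haL, haI⟩ := ext_lemma hEncl XL.2.1 NL.2.1
    intro hins
    obtain ⟨n, p, hp0, hpn, hpmem, hpstep⟩ := XL.2.2.1 x hx a haL
    obtain ⟨i, hi, hu, hw⟩ := exists_cross (· ∈ Inside (L (j + 1))) p n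
      (by rwa [hp0]) (by rwa [hpn])
    have huL : p i ∈ L j := hpmem i hi.le
    have hwL : p (i + 1) ∈ L j := hpmem (i + 1) hi
    have hXadj : XAdj (p i) (p (i + 1)) := hpstep i hi
    have hwL' : p (i + 1) ∉ L (j + 1) := fun hc => (inside_notL (NL.2.1 hc)) hwL
    set u := p i with hu_def
    set w := p (i + 1) with hw_def
    set r : V2 := (w.1, u.2) with hr
    have har1 : Adj2 r u := by
      have := hXadj.1
      simp only [Adj2, hr]
      rw [abs_sub_comm] at this
      simp [this]
    have har2 : Adj2 r w := by
      have := hXadj.2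
      simp only [Adj2, hr]
      simp [this]
    have hrmem : r ∈ L (j + 1) := by
      by_contra hrc
      have h1 : r ∈ Inside (L (j + 1)) := inside_step hu hrc (adj2_symm har1)
      exact hw (inside_step h1 hwL' har2)
    have hval_u : h u = H j := (essFacts hD hB hE j (le_of_lt hj)).1 u huL
    have hval_r : h r = H (j + 1) := (essFacts hD hB hE (j + 1) hj).1 r hrmem
    have grad := hH.1 r (hDj1 hrmem) u (hDj huL) har1
    rw [hval_u, hval_r] at grad
    have hd := NL.2.2.2
    rw [grad] at hd
    norm_num at hd

lemma f5 (hD : IsDomain2 D) (hH : HeightOn D h) (hB : ∀ v ∈ bdry D, h v = 0)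
    (hE : EssSeq D h M L H) :
    ∀ j m', j ≤ m' → m' ≤ M → ∀ x ∈ L j, x ∉ Inside (L m') := by
  intro j m' hjm hmM x hx hins
  rcases eq_or_lt_of_le hjm with rfl | hlt
  · exact (inside_notL hins) hx
  · have h1 : x ∈ Encl (L (j + 1)) :=
      encl_chain hE (j + 1) m' hlt hmM (Or.inr hins)
    rcases h1 with hc | hc
    · exact (inside_notL ((hE.2.2.1 j (lt_of_lt_of_le hlt hmM)).1.2.1 hc)) hx
    · exact f4 hD hH hB hE j (lt_of_lt_of_le hlt hmM) x hx hc

lemma f6 (hD : IsDomain2 D) (hH : HeightOn D h) (hB : ∀ v ∈ bdry D, h v = 0)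
    (hE : EssSeq D h M L H) {m' : ℕ} (hm : m' < M) :
    Encl (L (m' + 1)) ⊆ Inside (L m') := by
  have NL := (hE.2.2.1 m' hm).1
  rintro x (hx | hx)
  · exact NL.2.1 hx
  · rcases lemmaN NL.2.1 (Or.inr hx) with hc | hc
    · exact absurd hx (f4 hD hH hB hE m' hm x hc)
    · exact hc

lemma f7 (hD : IsDomain2 D) (hH : HeightOn D h) (hB : ∀ v ∈ bdry D, h v = 0)
    (hE : EssSeq D h M L H) {m' j : ℕ} (hmj : m' < j) (hjM : j ≤ M) :
    L j ⊆ Inside (L m') :=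
  Set.subset_union_left.trans
    ((encl_chain hE (m' + 1) j hmj hjM).trans
      (f6 hD hH hB hE (lt_of_lt_of_le hmj hjM)))

end EssFacts

noncomputable def Tmap (K : Set V2) (c : ℤ) (h : V2 → ℤ) : V2 → ℤ :=
  fun v => if v ∈ Inside K then 2 * c - h v else h v

lemma Tmap_invol (K : Set V2) (c : ℤ) (h : V2 → ℤ) : Tmap K c (Tmap K c h) = h := by
  funext v
  by_cases hv : v ∈ Inside K <;> simp [Tmap, hv]

section Flip
variable {D : Set V2} {h : V2 → ℤ} {M : ℕ} {L : ℕ → Set V2} {H : ℕ → ℤ}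

lemma flip_main (hD : IsDomain2 D) (hH : HeightOn D h) (hB : ∀ v ∈ bdry D, h v = 0)
    (hE : EssSeq D h M L H) {m : ℕ} (hm : m < M) :
    (HeightOn D (Tmap (L m) (H m) h) ∧ ∀ v ∈ bdry D, Tmap (L m) (H m) h v = 0) ∧
    EssSeq D (Tmap (L m) (H m) h) M L
      (fun j => if j < m then H j else 2 * H m - H j) := by
  set c := H m with hc
  set I := Inside (L m) with hI
  set g := Tmap (L m) c h with hg
  set H' : ℕ → ℤ := fun j => if j < m then H j else 2 * c - H j with hH'
  have hmM : m ≤ M := le_of_lt hm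
  have hgin : ∀ v ∈ I, g v = 2 * c - h v := by intro v hv; exact if_pos hv
  have hgout : ∀ v, v ∉ I → g v = h v := by intro v hv; exact if_neg hv
  have hlow : ∀ j ≤ m, H' j = H j := by
    intro j hj
    rcases lt_or_eq_of_le hj with hlt | rfl
    · simp [hH', hlt]
    · simp [hH', hc]; ring
  have hhigh : ∀ j, m ≤ j → H' j = 2 * c - H j := by
    intro j hj
    rcases lt_or_eq_of_le hj with hlt | rfl
    · simp [hH', Nat.lt_asymm hlt, not_lt_of_ge (le_of_lt hlt)]
    · simp [hH']
  have hA : ∀ j ≤ m, ∀ x ∈ L j, x ∉ I := fun j hj => f5 hD hH hB hE j m hj hmM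
  have hBn : ∀ j, m < j → j ≤ M → L j ⊆ I := fun j h1 h2 => f7 hD hH hB hE h1 h2
  have hID : I ⊆ D := Set.subset_union_right.trans (essFacts hD hB hE m hmM).2
  have hceven : Even c := H_even_of_ess hE m hmM
  have hHeven : ∀ j ≤ M, Even (H j) := H_even_of_ess hE
  have hval : ∀ j ≤ M, ∀ v ∈ L j, h v = H j := fun j hj => (essFacts hD hB hE j hj).1
  have hLmD : L m ⊆ D := Set.subset_union_left.trans (essFacts hD hB hE m hmM).2
  -- within-I form of g on high loops
  have hEnclI : ∀ j, m < j → j ≤ M → Encl (L j) ⊆ I := by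
    intro j h1 h2
    exact (encl_chain hE (m + 1) j h1 h2).trans (f6 hD hH hB hE hm)
  constructor
  · constructor
    · refine ⟨?_, ?_, ?_⟩
      · intro u hu v hv hadj
        by_cases hui : u ∈ I <;> by_cases hvi : v ∈ I
        · rw [hgin u hui, hgin v hvi]
          have := hH.1 u hu v hv hadj
          rw [show 2*c - h u - (2*c - h v) = -(h u - h v) by ring, abs_neg]
          exact this
        · by_cases hvL : v ∈ L m
          · rw [hgin u hui, hgout v hvi, hval m hmM v hvL]
            have := hH.1 u hu v hv hadj
            rw [hval m hmM v hvL] at this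
            rw [show 2*c - h u - c = -(h u - c) by ring, abs_neg]
            exact this
          · exact absurd (inside_step hui hvL hadj) hvi
        · by_cases huL : u ∈ L m
          · rw [hgout u hui, hgin v hvi, hval m hmM u huL]
            have := hH.1 u hu v hv hadj
            rw [hval m hmM u huL] at this
            rw [show c - (2*c - h v) = -(c - h v) by ring, abs_neg]
            exact this
          · exact absurd (inside_step hvi huL (adj2_symm hadj)) hui
        · rw [hgout u hui, hgout v hvi]; exact hH.1 u hu v hv hadj
      · intro v hv hev
        by_cases hvi : v ∈ I
        · rw [hgin v hvi]
          exact Even.sub (even_two_mul c) (hH.2.1 v hv hev)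
        · rw [hgout v hvi]; exact hH.2.1 v hv hev
      · intro v hv
        have : v ∉ I := fun hc => hv (hID hc)
        rw [hgout v this]; exact hH.2.2 v hv
    · intro v hv
      have hvL0 : v ∈ L 0 := hE.1 ▸ hv
      have : v ∉ I := hA 0 (Nat.zero_le m) v hvL0
      rw [hgout v this]; exact hB v hv
  · refine ⟨hE.1, ?_, ?_, ?_⟩
    · rw [hlow 0 (Nat.zero_le m)]; exact hE.2.1
    · intro j hj
      have NL := (hE.2.2.1 j hj).1
      constructor
      · -- NextLoop g (L j) (H' j) (L (j+1)) (H' (j+1))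
        refine ⟨⟨NL.1.1, ?_⟩, NL.2.1, NL.2.2.1, ?_⟩
        · intro v hvL
          by_cases hjm : j + 1 ≤ m
          · rw [hgout v (hA (j + 1) hjm v hvL), hval (j + 1) hj v hvL,
              hlow (j + 1) hjm]
          · have h1 : m < j + 1 := by omega
            rw [hgin v (hBn (j + 1) h1 hj hvL), hval (j + 1) hj v hvL,
              hhigh (j + 1) (by omega)]
        · by_cases hjm : j + 1 ≤ m
          · rw [hlow (j + 1) hjm, hlow j (by omega)]; exact NL.2.2.2
          · have h1 : m ≤ j := by omega
            rw [hhigh (j + 1) (by omega), hhigh j h1]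
            rw [show 2*c - H (j+1) - (2*c - H j) = -(H (j+1) - H j) by ring, abs_neg]
            exact NL.2.2.2
      · -- outermost
        rintro L' Hv ⟨⟨hXL', hlev'⟩, hsub', hsur', hdiff'⟩
        by_cases hjm : m ≤ j
        · -- L' ⊆ I; becomes h-loop at 2c - Hv
          have hLI : L' ⊆ I := by
            rcases eq_or_lt_of_le hjm with rfl | hlt
            · exact hsub'
            · exact hsub'.trans (Set.subset_union_right.trans
                (hEnclI j hlt (le_of_lt hj)))
          have hlevh : ∀ v ∈ L', h v = 2 * c - Hv := by
            intro v hv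
            have h1 := hlev' v hv
            rw [hgin v (hLI hv)] at h1
            omega
          have hd2 : |2 * c - Hv - H j| = 2 := by
            rw [hhigh j hjm] at hdiff'
            rw [show 2*c - Hv - H j = -(Hv - (2*c - H j)) by ring, abs_neg]
            exact hdiff'
          exact (hE.2.2.1 j hj).2 L' (2 * c - Hv) ⟨⟨hXL', hlevh⟩, hsub', hsur', hd2⟩
        · push_neg at hjm
          have hHveven : Even Hv := by
            rcases (abs_eq (by norm_num : (0:ℤ) ≤ 2)).mp hdiff' with he | he
            · obtain ⟨r, hr⟩ := hHeven j (le_of_lt hj)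
              have : H' j = H j := hlow j (le_of_lt hjm)
              exact ⟨r + 1, by omega⟩
            · obtain ⟨r, hr⟩ := hHeven j (le_of_lt hj)
              have : H' j = H j := hlow j (le_of_lt hjm)
              exact ⟨r - 1, by omega⟩
          by_cases hHc : Hv = c
          · have hlevh : ∀ v ∈ L', h v = Hv := by
              intro v hv
              have h1 := hlev' v hv
              by_cases hvI : v ∈ I
              · rw [hgin v hvI] at h1; omega
              · rwa [hgout v hvI] at h1
            exact (hE.2.2.1 j hj).2 L' Hv ⟨⟨hXL', hlevh⟩, hsub', hsur',
              by rwa [hlow j (le_of_lt hjm)] at hdiff'⟩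
          · by_cases hex : ∃ u ∈ L', u ∈ I
            · have hLI : L' ⊆ I := by
                intro w0 hw0L
                by_contra hw0I
                obtain ⟨u0, hu0L, hu0I⟩ := hex
                obtain ⟨n, p, hp0, hpn, hpmem, hpstep⟩ := hXL'.2.2.1 u0 hu0L w0 hw0L
                obtain ⟨i, hi, hui, hwi⟩ := exists_cross (· ∈ I) p n
                  (by rwa [hp0]) (by rwa [hpn])
                set u := p i with hu_def
                set w := p (i + 1) with hw_def
                have huL' : u ∈ L' := hpmem i hi.le
                have hwL' : w ∈ L' := hpmem (i + 1) hi
                have hXadj : XAdj u w := hpstep i hi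
                have hhu : h u = 2 * c - Hv := by
                  have h1 := hlev' u huL'
                  rw [hgin u hui] at h1; omega
                by_cases hwLm : w ∈ L m
                · have h1 := hlev' w hwL'
                  rw [hgout w hwi, hval m hmM w hwLm] at h1
                  exact hHc h1.symm
                · set r : V2 := (w.1, u.2) with hr
                  have har1 : Adj2 r u := by
                    have := hXadj.1
                    simp only [Adj2, hr]
                    rw [abs_sub_comm] at this
                    simp [this]
                  have har2 : Adj2 r w := by
                    have := hXadj.2
                    simp only [Adj2, hr]
                    simp [this]
                  have hrmem : r ∈ L m := by
                    by_contra hrc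
                    have h1 : r ∈ I := inside_step hui hrc (adj2_symm har1)
                    exact hwi (inside_step h1 hwLm har2)
                  have grad := hH.1 r (hLmD hrmem) u (hID hui) har1
                  rw [hval m hmM r hrmem, hhu] at grad
                  obtain ⟨k1, hk1⟩ := hceven
                  obtain ⟨k2, hk2⟩ := hHveven
                  rcases (abs_eq (by norm_num : (0:ℤ) ≤ 1)).mp grad with he | he
                  · omega
                  · omega
              exact (lemmaN hLI).trans (encl_chain hE (j + 1) m hjm hmM)
            · push_neg at hex
              have hlevh : ∀ v ∈ L', h v = Hv := by
                intro v hv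
                have h1 := hlev' v hv
                rwa [hgout v (hex v hv)] at h1
              exact (hE.2.2.1 j hj).2 L' Hv ⟨⟨hXL', hlevh⟩, hsub', hsur',
                by rwa [hlow j (le_of_lt hjm)] at hdiff'⟩
    · -- termination
      rintro L' Hv ⟨⟨hXL', hlev'⟩, hsub', hsur', hdiff'⟩
      have hLI : L' ⊆ I := by
        rcases eq_or_lt_of_le hmM with rfl | hlt
        · exact hsub'
        · exact hsub'.trans (Set.subset_union_right.trans
            (hEnclI M hlt le_rfl))
      have hlevh : ∀ v ∈ L', h v = 2 * c - Hv := by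
        intro v hv
        have h1 := hlev' v hv
        rw [hgin v (hLI hv)] at h1
        omega
      have hd2 : |2 * c - Hv - H M| = 2 := by
        rw [hhigh M hmM] at hdiff'
        rw [show 2*c - Hv - H M = -(Hv - (2*c - H M)) by ring, abs_neg]
        exact hdiff'
      exact hE.2.2.2 L' (2 * c - Hv) ⟨⟨hXL', hlevh⟩, hsub', hsur', hd2⟩

end Flip

lemma measure_eq_of_bij {S A B : Set (V2 → ℤ)} (hSfin : S.Finite)
    (T : (V2 → ℤ) → (V2 → ℤ)) (hTinv : ∀ f, T (T f) = f)
    (hAB : ∀ f ∈ S ∩ A, T f ∈ S ∩ B) (hBA : ∀ f ∈ S ∩ B, T f ∈ S ∩ A) :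
    uniformOn S A = uniformOn S B := by
  have hSm : MeasurableSet S := hSfin.countable.measurableSet
  unfold uniformOn
  rw [cond_apply hSm, cond_apply hSm]
  congr 1
  have hTinj : Function.Injective T := Function.LeftInverse.injective hTinv
  have h1 : S ∩ B = T '' (S ∩ A) := by
    apply Set.eq_of_subset_of_subset
    · intro x hx; exact ⟨T x, hBA x hx, hTinv x⟩
    · rintro _ ⟨x, hx, rfl⟩; exact hAB x hx
  have hA : (S ∩ A).Finite := hSfin.inter_of_left A
  have hB : (S ∩ B).Finite := hSfin.inter_of_left B
  rw [Measure.count_apply_finite _ hA, Measure.count_apply_finite _ hB]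
  congr 1
  rw [← Set.ncard_eq_toFinset_card _ hA, ← Set.ncard_eq_toFinset_card _ hB, h1]
  exact (Set.ncard_image_of_injective _ hTinj).symm

lemma S_finite {D : Set V2} (hD : IsDomain2 D) (hne : D.Nonempty) :
    {f : V2 → ℤ | HeightOn D f ∧ ∀ v ∈ bdry D, f v = 0}.Finite := by
  set S := {f : V2 → ℤ | HeightOn D f ∧ ∀ v ∈ bdry D, f v = 0} with hS
  -- a boundary point exists
  obtain ⟨b, hbD, hbmax⟩ := hD.1.exists_maximalFor Prod.fst _ hne
  have hbd : b ∈ bdry D := by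
    refine ⟨hbD, (b.1 + 1, b.2), by simp [Adj2], ?_⟩
    intro hc
    have := hbmax hc (by simp)
    simp at this
  -- pointwise bounds
  have hbound : ∀ v : V2, ∃ n : ℕ, ∀ f ∈ S, |f v| ≤ n := by
    intro v
    by_cases hv : v ∈ D
    · obtain ⟨n, p, hp0, hpn, hpmem, hpstep⟩ := hD.2.1.1 v hv b hbD
      refine ⟨n, ?_⟩
      intro f hf
      have key : ∀ i ≤ n, |f (p (n - i))| ≤ (i : ℤ) := by
        intro i
        induction i with
        | zero =>
          intro _
          simp only [Nat.sub_zero, hpn]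
          rw [hf.2 b hbd]
          simp
        | succ k ih =>
          intro hk
          have hk' : k ≤ n := by omega
          have ihk := ih hk'
          have hstep : |f (p (n - (k+1))) - f (p (n - (k+1) + 1))| = 1 := by
            apply hf.1.1 _ (hpmem _ (by omega)) _ (hpmem _ (by omega))
            exact hpstep (n - (k + 1)) (by omega)
          have he : n - (k + 1) + 1 = n - k := by omega
          rw [he] at hstep
          rcases (abs_eq (by norm_num : (0:ℤ) ≤ 1)).mp hstep with h1 | h1 <;>
          · rw [abs_le] at ihk ⊢
            push_cast
            omega
      have := key n le_rfl
      simpa [hp0] using this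
    · exact ⟨0, fun f hf => by rw [hf.1.2.2 v hv]; simp⟩
  choose Bd hBd using hbound
  -- inject into a finite product
  classical
  set e : (V2 → ℤ) → (hD.1.toFinset → ℤ) := fun f v => f v with he
  have hinj : Set.InjOn e S := by
    intro f1 h1 f2 h2 hee
    funext v
    by_cases hv : v ∈ D
    · have : (⟨v, hD.1.mem_toFinset.mpr hv⟩ : hD.1.toFinset) ∈ (Set.univ : Set hD.1.toFinset) := trivial
      exact congrFun hee ⟨v, hD.1.mem_toFinset.mpr hv⟩
    · rw [h1.1.2.2 v hv, h2.1.2.2 v hv]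
  have himg : e '' S ⊆ Set.pi Set.univ
      (fun v : hD.1.toFinset => Set.Icc (-(Bd v : ℤ)) (Bd v)) := by
    rintro _ ⟨f, hf, rfl⟩ v _
    have := hBd v f hf
    rw [abs_le] at this
    exact ⟨this.1, this.2⟩
  have hfin : (Set.pi Set.univ
      (fun v : hD.1.toFinset => Set.Icc (-(Bd v : ℤ)) (Bd v))).Finite :=
    Set.Finite.pi (fun v => Set.finite_Icc _ _)
  exact Set.Finite.of_finite_image (hfin.subset himg) hinj

lemma sum_flipAt (t : ℕ → ℤ) (m : ℕ) (j : ℕ) :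
    (∑ i ∈ Finset.range j, (if i < m then t i else -t i)) =
      if j < m then ∑ i ∈ Finset.range j, t i
      else 2 * (∑ i ∈ Finset.range m, t i) - ∑ i ∈ Finset.range j, t i := by
  by_cases hj : j < m
  · rw [if_pos hj]
    exact Finset.sum_congr rfl fun i hi => if_pos ((Finset.mem_range.mp hi).trans hj)
  · rw [if_neg hj]
    push_neg at hj
    have h1 : ∀ i ∈ Finset.range j, (if i < m then t i else -t i)
        = 2 * (if i < m then t i else 0) - t i := by
      intro i _
      by_cases h : i < m <;> simp [h] <;> ring
    rw [Finset.sum_congr rfl h1, Finset.sum_sub_distrib, ← Finset.mul_sum]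
    congr 2
    rw [← Finset.sum_subset (Finset.range_mono hj)
      (fun x _ hx => if_neg (fun hc => hx (Finset.mem_range.mpr hc)))]
    exact Finset.sum_congr rfl fun i hi => if_pos (Finset.mem_range.mp hi)

lemma essSeq_congr {D : Set V2} {h : V2 → ℤ} {M : ℕ} {L : ℕ → Set V2}
    {H1 H2 : ℕ → ℤ} (hH : ∀ j ≤ M, H1 j = H2 j) :
    EssSeq D h M L H1 → EssSeq D h M L H2 := by
  rintro ⟨e1, e2, e3, e4⟩
  refine ⟨e1, by rw [← hH 0 (Nat.zero_le M)]; exact e2, ?_, ?_⟩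
  · intro k hk
    rw [← hH k (by omega), ← hH (k + 1) (by omega)]
    exact e3 k hk
  · rw [← hH M le_rfl]; exact e4

lemma single_flip {D : Set V2} (hD : IsDomain2 D) (hne : D.Nonempty)
    (M : ℕ) (L : ℕ → Set V2) (t : ℕ → ℤ) (m : ℕ) (hm : m < M) :
    uniformOn {f : V2 → ℤ | HeightOn D f ∧ ∀ v ∈ bdry D, f v = 0}
      {f | EssSeq D f M L fun j => ∑ i ∈ Finset.range j, t i} =
    uniformOn {f : V2 → ℤ | HeightOn D f ∧ ∀ v ∈ bdry D, f v = 0}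
      {f | EssSeq D f M L fun j => ∑ i ∈ Finset.range j, (if i < m then t i else -t i)} := by
  set c : ℤ := ∑ i ∈ Finset.range m, t i with hc
  have heq1 : (fun j => ∑ i ∈ Finset.range j, (if i < m then t i else -t i))
      = fun j => if j < m then (∑ i ∈ Finset.range j, t i)
        else 2 * c - (∑ i ∈ Finset.range j, t i) := funext (sum_flipAt t m)
  have hc' : (∑ i ∈ Finset.range m, (if i < m then t i else -t i)) = c := by
    rw [sum_flipAt t m m]
    simp
    omega
  have heq2 : (fun j => if j < m
        then (∑ i ∈ Finset.range j, (if i < m then t i else -t i))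
        else 2 * (∑ i ∈ Finset.range m, (if i < m then t i else -t i))
          - (∑ i ∈ Finset.range j, (if i < m then t i else -t i)))
      = fun j => ∑ i ∈ Finset.range j, t i := by
    funext j
    rw [hc', sum_flipAt t m j]
    by_cases hj : j < m
    · simp [hj]
    · simp only [hj, if_neg, if_false]
      ring
  apply measure_eq_of_bij (S_finite hD hne) (Tmap (L m) c) (Tmap_invol _ _)
  · rintro f ⟨hfS, hfA⟩
    have hE : EssSeq D f M L (fun j => ∑ i ∈ Finset.range j, t i) := hfA
    have hmain := flip_main hD hfS.1 hfS.2 hE hm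
    refine ⟨⟨hmain.1.1, hmain.1.2⟩, ?_⟩
    show EssSeq D (Tmap (L m) c f) M L
      (fun j => ∑ i ∈ Finset.range j, (if i < m then t i else -t i))
    rw [heq1]
    exact hmain.2
  · rintro f ⟨hfS, hfB⟩
    have hE : EssSeq D f M L (fun j => ∑ i ∈ Finset.range j, (if i < m then t i else -t i)) := hfB
    have hmain := flip_main hD hfS.1 hfS.2 hE hm
    have hcc : (fun j => ∑ i ∈ Finset.range j, (if i < m then t i else -t i)) m = c := hc'
    refine ⟨?_, ?_⟩
    · rw [show Tmap (L m) c f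
          = Tmap (L m) ((fun j => ∑ i ∈ Finset.range j, (if i < m then t i else -t i)) m) f
        by rw [hcc]]
      exact ⟨hmain.1.1, hmain.1.2⟩
    · show EssSeq D (Tmap (L m) c f) M L (fun j => ∑ i ∈ Finset.range j, t i)
      rw [show Tmap (L m) c f
          = Tmap (L m) ((fun j => ∑ i ∈ Finset.range j, (if i < m then t i else -t i)) m) f
        by rw [hcc]]
      have h2 := hmain.2
      apply essSeq_congr (H1 := fun j => if j < m
        then ((fun j => ∑ i ∈ Finset.range j, (if i < m then t i else -t i)) j)
        else 2 * ((fun j => ∑ i ∈ Finset.range j, (if i < m then t i else -t i)) m)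
          - ((fun j => ∑ i ∈ Finset.range j, (if i < m then t i else -t i)) j))
      · intro j _
        exact congrFun heq2 j
      · exact h2

lemma chain_lemma {D : Set V2} (hD : IsDomain2 D) (hne : D.Nonempty)
    (M : ℕ) (L : ℕ → Set V2) (s' : ℕ → ℤ) (hs' : ∀ j < M, s' j = 2 ∨ s' j = -2) :
    ∀ n : ℕ, ∀ t : ℕ → ℤ, (∀ j < M, t j = 2 ∨ t j = -2) →
      (∀ j < M, j < M - n → t j = s' j) →
      uniformOn {f : V2 → ℤ | HeightOn D f ∧ ∀ v ∈ bdry D, f v = 0}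
        {f | EssSeq D f M L fun j => ∑ i ∈ Finset.range j, t i} =
      uniformOn {f : V2 → ℤ | HeightOn D f ∧ ∀ v ∈ bdry D, f v = 0}
        {f | EssSeq D f M L fun j => ∑ i ∈ Finset.range j, s' i} := by
  intro n
  induction n with
  | zero =>
    intro t ht hagree
    have hsets : {f : V2 → ℤ | EssSeq D f M L fun j => ∑ i ∈ Finset.range j, t i}
        = {f | EssSeq D f M L fun j => ∑ i ∈ Finset.range j, s' i} := by
      have hsum : ∀ j ≤ M, (∑ i ∈ Finset.range j, t i) = ∑ i ∈ Finset.range j, s' i := by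
        intro j hj
        refine Finset.sum_congr rfl fun i hi => ?_
        have hiM : i < M := lt_of_lt_of_le (Finset.mem_range.mp hi) hj
        exact hagree i hiM (by omega)
      ext f
      constructor
      · exact essSeq_congr hsum
      · exact essSeq_congr (fun j hj => (hsum j hj).symm)
    rw [hsets]
  | succ n ih =>
    intro t ht hagree
    by_cases hcase : ∀ j < M, j < M - n → t j = s' j
    · exact ih t ht hcase
    · push_neg at hcase
      obtain ⟨j, hjM, hjn, hnej⟩ := hcase
      have hjk : j = M - (n + 1) := by
        by_contra hne2
        exact hnej (hagree j hjM (by omega))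
      rw [single_flip hD hne M L t j hjM]
      apply ih
      · intro j' hj'
        by_cases h : j' < j
        · rw [if_pos h]; exact ht j' hj'
        · rw [if_neg h]
          rcases ht j' hj' with h1 | h1 <;> rw [h1] <;> norm_num
      · intro j' hj'M hj'n
        by_cases h : j' < j
        · rw [if_pos h]
          exact hagree j' hj'M (by omega)
        · have hj'j : j' = j := by omega
          subst hj'j
          rw [if_neg h]
          rcases ht j' hj'M with h1 | h1 <;> rcases hs' j' hj'M with h2 | h2 <;> omega

/-- Conditioned on the sequence of essential level loops, the height
increments are i.i.d. uniform on `{-2, +2}`: the probability that the essential sequence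
equals a given sequence of loops with heights given by the partial sums of a sequence of
`±2` signs does not depend on the choice of signs. -/
theorem essential_loop_heights_are_simple_random_walk
    (D : Set V2) (hD : IsDomain2 D) (h0 : ((0 : ℤ), (0 : ℤ)) ∈ D)
    (M : ℕ) (L : ℕ → Set V2) (s s' : ℕ → ℤ)
    (hs : ∀ m < M, s m = 2 ∨ s m = -2) (hs' : ∀ m < M, s' m = 2 ∨ s' m = -2) :
    phiBC D 0 {h | EssSeq D h M L fun m => ∑ i ∈ Finset.range m, s i} =
      phiBC D 0 {h | EssSeq D h M L fun m => ∑ i ∈ Finset.range m, s' i} := by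
  have hne : D.Nonempty := ⟨_, h0⟩
  have hphi : phiBC D 0
      = uniformOn {f : V2 → ℤ | HeightOn D f ∧ ∀ v ∈ bdry D, f v = 0} := rfl
  rw [hphi]
  exact chain_lemma hD hne M L s' hs' M s hs (fun j hjM hj0 => by omega)
end
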